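/- For the mean-field BEG model with target π(x) ∝ exp(−βR_N(x) + (Kβ/N)S_N(x)²) on X = {−1,0,1}^N and local Metropolis chain M_E with proposal K_E(x,·) that adds ±1 (mod 3, identified with {−1,0,1}) to a uniformly chosen coordinate: with A = {x : S_N(x) < 0}, one has π(A) ≤ 1/2 and Σ_{x∈A, y∈A^c} π(x)M_E(x,y) ≤ π{y : S_N(y) ∈ {0,1}}, hence the conductance satisfies h(π, M_E) ≤ 2π{y : S_N(y) ∈ {0,1}}/(1 − π{y : S_N(y) = 0}). -/

import Mathlib

open Finset

/-- Spin value of a BEG site, encoding `Fin 3 = {0,1,2}` as `{-1,0,1}`. -/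
def begSpin (t : Fin 3) : ℤ := (t : ℤ) - 1

/-- `S_N(x) = ∑ x_i`. -/
def begSN (N : ℕ) (x : Fin N → Fin 3) : ℤ := ∑ i, begSpin (x i)

/-- `R_N(x) = ∑ x_i²`. -/
def begRN (N : ℕ) (x : Fin N → Fin 3) : ℤ := ∑ i, (begSpin (x i)) ^ 2

/-- BEG Gibbs weight `exp(-β R_N(x) + (Kβ/N) S_N(x)²)`. -/
noncomputable def begW (N : ℕ) (β K : ℝ) (x : Fin N → Fin 3) : ℝ :=
  Real.exp (-β * (begRN N x : ℝ) + K * β / N * (begSN N x : ℝ) ^ 2)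

/-- The BEG Gibbs measure `π(x) = begW(x)/Z_N`. -/
noncomputable def begPi (N : ℕ) (β K : ℝ) (x : Fin N → Fin 3) : ℝ :=
  begW N β K x / ∑ y, begW N β K y

/-- The local proposal `K_E`: add `±1` (mod 3, i.e. with `2 = -1`, `-2 = 1`) to a
uniformly chosen coordinate. -/
noncomputable def begKE (N : ℕ) (x y : Fin N → Fin 3) : ℝ :=
  (1 / (2 * (N : ℝ))) * ∑ j,
    ((if y = Function.update x j (x j + 1) then (1 : ℝ) else 0) +
     (if y = Function.update x j (x j + 2) then (1 : ℝ) else 0))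

/-- The local Metropolis chain `M_E` for `π` with (symmetric) proposal `K_E`. -/
noncomputable def begME (N : ℕ) (β K : ℝ) (x y : Fin N → Fin 3) : ℝ :=
  if y = x then
    1 - ∑ z ∈ Finset.univ.erase x, begKE N x z * min 1 (begPi N β K z / begPi N β K x)
  else begKE N x y * min 1 (begPi N β K y / begPi N β K x)

section Helpers
variable {N : ℕ} {β K : ℝ}

lemma begW_pos (x : Fin N → Fin 3) : 0 < begW N β K x := Real.exp_pos _

lemma begZ_pos : 0 < ∑ y : Fin N → Fin 3, begW N β K y :=
  Finset.sum_pos (fun y _ => begW_pos y) ⟨fun _ => 0, Finset.mem_univ _⟩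

lemma begPi_pos (x : Fin N → Fin 3) : 0 < begPi N β K x :=
  div_pos (begW_pos x) begZ_pos

lemma sum_begPi : ∑ x : Fin N → Fin 3, begPi N β K x = 1 := by
  simp only [begPi]
  rw [← Finset.sum_div]
  exact div_self (ne_of_gt begZ_pos)

def neg3 : Fin 3 → Fin 3 := fun t => 2 - t

lemma begSpin_neg3 (t : Fin 3) : begSpin (neg3 t) = - begSpin t := by
  fin_cases t <;> decide

lemma neg3_invol (t : Fin 3) : neg3 (neg3 t) = t := by fin_cases t <;> decide

lemma begSN_neg (x : Fin N → Fin 3) : begSN N (fun i => neg3 (x i)) = - begSN N x := by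
  simp [begSN, begSpin_neg3, Finset.sum_neg_distrib]

lemma begRN_neg (x : Fin N → Fin 3) : begRN N (fun i => neg3 (x i)) = begRN N x := by
  simp [begRN, begSpin_neg3]

lemma begW_neg (x : Fin N → Fin 3) : begW N β K (fun i => neg3 (x i)) = begW N β K x := by
  unfold begW
  rw [begSN_neg, begRN_neg]
  simp only [Int.cast_neg, neg_sq]

lemma begPi_neg (x : Fin N → Fin 3) : begPi N β K (fun i => neg3 (x i)) = begPi N β K x := by
  unfold begPi
  rw [begW_neg]

lemma begSN_update (x : Fin N → Fin 3) (j : Fin N) (v : Fin 3) :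
    begSN N (Function.update x j v) = begSN N x - begSpin (x j) + begSpin v := by
  unfold begSN
  have h : ∀ i, begSpin (Function.update x j v i)
      = Function.update (fun i => begSpin (x i)) j (begSpin v) i := by
    intro i
    by_cases h : i = j
    · subst h; simp
    · simp [Function.update_of_ne h]
  rw [Finset.sum_congr rfl (fun i _ => h i),
    Finset.sum_update_of_mem (Finset.mem_univ j),
    ← Finset.sum_erase_add _ _ (Finset.mem_univ j), Finset.sdiff_singleton_eq_erase]
  ring

lemma begSpin_bound (t : Fin 3) : -1 ≤ begSpin t ∧ begSpin t ≤ 1 := by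
  fin_cases t <;> decide

lemma begKE_nonneg (x y : Fin N → Fin 3) : 0 ≤ begKE N x y := by
  unfold begKE
  apply mul_nonneg (by positivity)
  apply Finset.sum_nonneg
  intro j _
  positivity

lemma begKE_symm (x y : Fin N → Fin 3) : begKE N x y = begKE N y x := by
  have aux : ∀ (a b : Fin N → Fin 3) (j : Fin N) (c d : Fin 3), c + d = 0 →
      b = Function.update a j (a j + c) → a = Function.update b j (b j + d) := by
    intro a b j c d hcd hb
    subst hb
    rw [Function.update_self, Function.update_idem, add_assoc, hcd, add_zero,
      Function.update_eq_self]
  unfold begKE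
  congr 1
  apply Finset.sum_congr rfl
  intro j _
  have h1 : (y = Function.update x j (x j + 1)) ↔ (x = Function.update y j (y j + 2)) :=
    ⟨aux x y j 1 2 (by decide), aux y x j 2 1 (by decide)⟩
  have h2 : (y = Function.update x j (x j + 2)) ↔ (x = Function.update y j (y j + 1)) :=
    ⟨aux x y j 2 1 (by decide), aux y x j 1 2 (by decide)⟩
  rw [if_congr h1 rfl rfl, if_congr h2 rfl rfl, add_comm]

lemma begKE_row (hN : 0 < N) (y : Fin N → Fin 3) : ∑ x : Fin N → Fin 3, begKE N y x = 1 := by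
  unfold begKE
  rw [← Finset.mul_sum, Finset.sum_comm]
  have : ∀ j : Fin N, (∑ x : Fin N → Fin 3,
      ((if x = Function.update y j (y j + 1) then (1:ℝ) else 0) +
       (if x = Function.update y j (y j + 2) then (1:ℝ) else 0))) = 2 := by
    intro j
    rw [Finset.sum_add_distrib, Finset.sum_ite_eq' _ _ (fun _ => (1:ℝ)),
      Finset.sum_ite_eq' _ _ (fun _ => (1:ℝ))]
    norm_num
  rw [Finset.sum_congr rfl (fun j _ => this j), Finset.sum_const, Finset.card_univ,
    Fintype.card_fin]
  have hN' : (N : ℝ) ≠ 0 := Nat.cast_ne_zero.mpr hN.ne'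
  field_simp
  ring

lemma begKE_ne_zero_SN {x y : Fin N → Fin 3} (h : begKE N x y ≠ 0) :
    begSN N x - 2 ≤ begSN N y ∧ begSN N y ≤ begSN N x + 2 := by
  unfold begKE at h
  have h2 := right_ne_zero_of_mul h
  obtain ⟨j, _, hj⟩ := Finset.exists_ne_zero_of_sum_ne_zero h2
  have : ∃ v : Fin 3, y = Function.update x j v := by
    by_cases h1 : y = Function.update x j (x j + 1)
    · exact ⟨_, h1⟩
    by_cases hh2 : y = Function.update x j (x j + 2)
    · exact ⟨_, hh2⟩
    · simp [h1, hh2] at hj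
  obtain ⟨v, hv⟩ := this
  rw [hv, begSN_update]
  have b1 := begSpin_bound (x j)
  have b2 := begSpin_bound v
  omega

lemma sum_pi_neg_eq :
    ∑ x ∈ Finset.univ.filter (fun x : Fin N → Fin 3 => begSN N x < 0), begPi N β K x
      = ∑ x ∈ Finset.univ.filter (fun x : Fin N → Fin 3 => 0 < begSN N x), begPi N β K x := by
  apply Finset.sum_nbij' (i := fun x => fun k => neg3 (x k)) (j := fun x => fun k => neg3 (x k))
  · intro a ha
    simp only [Finset.mem_filter, Finset.mem_univ, true_and] at ha ⊢
    rw [begSN_neg]; omega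
  · intro a ha
    simp only [Finset.mem_filter, Finset.mem_univ, true_and] at ha ⊢
    rw [begSN_neg]; omega
  · intro a _; funext k; exact neg3_invol _
  · intro a _; funext k; exact neg3_invol _
  · intro a _; exact (begPi_neg a).symm

lemma pi_partition :
    2 * (∑ x ∈ Finset.univ.filter (fun x : Fin N → Fin 3 => begSN N x < 0), begPi N β K x)
      + (∑ x ∈ Finset.univ.filter (fun x : Fin N → Fin 3 => begSN N x = 0), begPi N β K x)
      = 1 := by
  have h1 : ∑ x ∈ Finset.univ.filter (fun x : Fin N → Fin 3 => begSN N x < 0), begPi N β K x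
      + ∑ x ∈ Finset.univ.filter (fun x : Fin N → Fin 3 => ¬ begSN N x < 0), begPi N β K x
      = 1 := by
    rw [Finset.sum_filter_add_sum_filter_not]; exact sum_begPi
  have h2 : ∑ x ∈ Finset.univ.filter (fun x : Fin N → Fin 3 => ¬ begSN N x < 0), begPi N β K x
      = ∑ x ∈ Finset.univ.filter (fun x : Fin N → Fin 3 => begSN N x = 0), begPi N β K x
      + ∑ x ∈ Finset.univ.filter (fun x : Fin N → Fin 3 => 0 < begSN N x), begPi N β K x := by
    rw [← Finset.sum_filter_add_sum_filter_not
      (Finset.univ.filter (fun x : Fin N → Fin 3 => ¬ begSN N x < 0))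
      (fun x => begSN N x = 0), Finset.filter_filter, Finset.filter_filter]
    congr 2 <;> apply Finset.filter_congr <;> intro x _ <;> constructor <;> intro h
    · exact h.2
    · exact ⟨by omega, h⟩
    · omega
    · omega
  rw [two_mul]
  nth_rewrite 2 [sum_pi_neg_eq]
  linarith [h1, h2]
lemma begME_term_le (x y : Fin N → Fin 3) (hyx : y ≠ x) :
    begPi N β K x * begME N β K x y ≤ begKE N x y * begPi N β K y := by
  rw [begME, if_neg hyx]
  have hπx : 0 < begPi N β K x := begPi_pos x
  have key : begPi N β K x * min 1 (begPi N β K y / begPi N β K x) ≤ begPi N β K y := by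
    calc begPi N β K x * min 1 (begPi N β K y / begPi N β K x)
        ≤ begPi N β K x * (begPi N β K y / begPi N β K x) :=
          mul_le_mul_of_nonneg_left (min_le_right _ _) hπx.le
      _ = begPi N β K y := by field_simp
  calc begPi N β K x * (begKE N x y * min 1 (begPi N β K y / begPi N β K x))
      = begKE N x y * (begPi N β K x * min 1 (begPi N β K y / begPi N β K x)) := by ring
    _ ≤ begKE N x y * begPi N β K y :=
        mul_le_mul_of_nonneg_left key (begKE_nonneg x y)

lemma flow_bound (hN : 0 < N) :
    (∑ x ∈ Finset.univ.filter (fun x : Fin N → Fin 3 => begSN N x < 0),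
        ∑ y ∈ (Finset.univ.filter (fun x : Fin N → Fin 3 => begSN N x < 0))ᶜ,
          begPi N β K x * begME N β K x y)
      ≤ ∑ y ∈ Finset.univ.filter
          (fun y : Fin N → Fin 3 => begSN N y = 0 ∨ begSN N y = 1), begPi N β K y := by
  set A := Finset.univ.filter (fun x : Fin N → Fin 3 => begSN N x < 0) with hA
  have memA : ∀ x, x ∈ A ↔ begSN N x < 0 := by
    intro x; simp [hA]
  calc (∑ x ∈ A, ∑ y ∈ Aᶜ, begPi N β K x * begME N β K x y)
      ≤ ∑ x ∈ A, ∑ y ∈ Aᶜ, begKE N x y * begPi N β K y := by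
        apply Finset.sum_le_sum; intro x hx
        apply Finset.sum_le_sum; intro y hy
        have hyx : y ≠ x := by
          intro h; subst h; exact (Finset.mem_compl.mp hy) hx
        exact begME_term_le x y hyx
    _ = ∑ y ∈ Aᶜ, (∑ x ∈ A, begKE N x y) * begPi N β K y := by
        rw [Finset.sum_comm]
        exact Finset.sum_congr rfl (fun y _ => (Finset.sum_mul _ _ _).symm)
    _ ≤ ∑ y ∈ Aᶜ, (if begSN N y = 0 ∨ begSN N y = 1 then begPi N β K y else 0) := by
        apply Finset.sum_le_sum; intro y hy
        have hSy : ¬ begSN N y < 0 := by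
          rw [Finset.mem_compl, memA] at hy; exact hy
        by_cases hP : begSN N y = 0 ∨ begSN N y = 1
        · rw [if_pos hP]
          have hle1 : (∑ x ∈ A, begKE N x y) ≤ 1 := by
            calc (∑ x ∈ A, begKE N x y)
                ≤ ∑ x : Fin N → Fin 3, begKE N x y :=
                  Finset.sum_le_sum_of_subset_of_nonneg (Finset.subset_univ _)
                    (fun x _ _ => begKE_nonneg x y)
              _ = ∑ x : Fin N → Fin 3, begKE N y x :=
                  Finset.sum_congr rfl (fun x _ => begKE_symm x y)
              _ = 1 := begKE_row hN y
          calc (∑ x ∈ A, begKE N x y) * begPi N β K y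
              ≤ 1 * begPi N β K y :=
                mul_le_mul_of_nonneg_right hle1 (begPi_pos y).le
            _ = begPi N β K y := one_mul _
        · rw [if_neg hP]
          have : (∑ x ∈ A, begKE N x y) = 0 := by
            apply Finset.sum_eq_zero; intro x hx
            by_contra hne
            have hb := begKE_ne_zero_SN hne
            rw [memA] at hx
            omega
          rw [this, zero_mul]
    _ = ∑ y ∈ Aᶜ.filter (fun y => begSN N y = 0 ∨ begSN N y = 1), begPi N β K y :=
        (Finset.sum_filter _ _).symm
    _ ≤ ∑ y ∈ Finset.univ.filter
          (fun y : Fin N → Fin 3 => begSN N y = 0 ∨ begSN N y = 1), begPi N β K y := by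
        apply Finset.sum_le_sum_of_subset_of_nonneg
        · exact Finset.filter_subset_filter _ (Finset.subset_univ _)
        · exact fun y _ _ => (begPi_pos y).le

lemma begME_nonneg_offdiag (x y : Fin N → Fin 3) (hyx : y ≠ x) :
    0 ≤ begME N β K x y := by
  rw [begME, if_neg hyx]
  apply mul_nonneg (begKE_nonneg x y)
  exact le_min zero_le_one (div_nonneg (begPi_pos y).le (begPi_pos x).le)

end Helpers
/-- with `A = {x : S_N(x) < 0}` one has `π(A) ≤ 1/2`, the crossing
probability satisfies `∑_{x∈A, y∈Aᶜ} π(x) M_E(x,y) ≤ π{y : S_N(y) ∈ {0,1}}`, and hence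
`h(π,M_E) ≤ 2 π{S_N ∈ {0,1}} / (1 - π{S_N = 0})`. -/
theorem beg_conductance_bound (N : ℕ) (hN : 0 < N) (hNe : Even N)
    (β K : ℝ) (hβ : 0 < β) (hK : 0 < K) :
    (∑ x ∈ Finset.univ.filter (fun x : Fin N → Fin 3 => begSN N x < 0),
        begPi N β K x) ≤ 1 / 2 ∧
    (∑ x ∈ Finset.univ.filter (fun x : Fin N → Fin 3 => begSN N x < 0),
        ∑ y ∈ (Finset.univ.filter (fun x : Fin N → Fin 3 => begSN N x < 0))ᶜ,
          begPi N β K x * begME N β K x y)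
      ≤ ∑ y ∈ Finset.univ.filter
          (fun y : Fin N → Fin 3 => begSN N y = 0 ∨ begSN N y = 1), begPi N β K y ∧
    sInf {v : ℝ | ∃ B : Finset (Fin N → Fin 3), B.Nonempty ∧
        (∑ x ∈ B, begPi N β K x) ≤ 1 / 2 ∧
        v = (1 / ∑ x ∈ B, begPi N β K x) *
          ∑ x ∈ B, ∑ y ∈ Bᶜ, begPi N β K x * begME N β K x y}
      ≤ 2 * (∑ y ∈ Finset.univ.filter
            (fun y : Fin N → Fin 3 => begSN N y = 0 ∨ begSN N y = 1), begPi N β K y) /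
          (1 - ∑ y ∈ Finset.univ.filter
            (fun y : Fin N → Fin 3 => begSN N y = 0), begPi N β K y) := by
  set A := Finset.univ.filter (fun x : Fin N → Fin 3 => begSN N x < 0) with hA
  set πA := ∑ x ∈ A, begPi N β K x with hπA
  set π0 := ∑ y ∈ Finset.univ.filter
      (fun y : Fin N → Fin 3 => begSN N y = 0), begPi N β K y with hπ0
  set π01 := ∑ y ∈ Finset.univ.filter
      (fun y : Fin N → Fin 3 => begSN N y = 0 ∨ begSN N y = 1), begPi N β K y with hπ01
  have hpart : 2 * πA + π0 = 1 := pi_partition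
  have hπ0nn : 0 ≤ π0 := Finset.sum_nonneg (fun y _ => (begPi_pos y).le)
  have hπ01nn : 0 ≤ π01 := Finset.sum_nonneg (fun y _ => (begPi_pos y).le)
  have hAne : A.Nonempty := by
    refine ⟨fun _ => 0, ?_⟩
    simp only [hA, Finset.mem_filter, Finset.mem_univ, true_and]
    have : begSN N (fun _ => (0 : Fin 3)) = -N := by
      unfold begSN
      simp [begSpin]
    rw [this]
    simp only [neg_neg, Left.neg_neg_iff]
    exact_mod_cast hN
  have hπApos : 0 < πA := Finset.sum_pos (fun x _ => begPi_pos x) hAne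
  have part1 : πA ≤ 1 / 2 := by linarith
  have part2 := flow_bound (N := N) (β := β) (K := K) hN
  refine ⟨part1, part2, ?_⟩
  have hbdd : BddBelow {v : ℝ | ∃ B : Finset (Fin N → Fin 3), B.Nonempty ∧
      (∑ x ∈ B, begPi N β K x) ≤ 1 / 2 ∧
      v = (1 / ∑ x ∈ B, begPi N β K x) *
        ∑ x ∈ B, ∑ y ∈ Bᶜ, begPi N β K x * begME N β K x y} := by
    refine ⟨0, ?_⟩
    rintro v ⟨B, hBne, _, rfl⟩
    have hπB : 0 < ∑ x ∈ B, begPi N β K x :=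
      Finset.sum_pos (fun x _ => begPi_pos x) hBne
    apply mul_nonneg (by positivity)
    apply Finset.sum_nonneg; intro x hx
    apply Finset.sum_nonneg; intro y hy
    have hyx : y ≠ x := fun h => (Finset.mem_compl.mp hy) (h ▸ hx)
    exact mul_nonneg (begPi_pos x).le (begME_nonneg_offdiag x y hyx)
  have hmem : (1 / πA) * ∑ x ∈ A, ∑ y ∈ Aᶜ, begPi N β K x * begME N β K x y
      ∈ {v : ℝ | ∃ B : Finset (Fin N → Fin 3), B.Nonempty ∧
        (∑ x ∈ B, begPi N β K x) ≤ 1 / 2 ∧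
        v = (1 / ∑ x ∈ B, begPi N β K x) *
          ∑ x ∈ B, ∑ y ∈ Bᶜ, begPi N β K x * begME N β K x y} :=
    ⟨A, hAne, part1, rfl⟩
  refine csInf_le_of_le hbdd hmem ?_
  have h1 : (1 / πA) * (∑ x ∈ A, ∑ y ∈ Aᶜ, begPi N β K x * begME N β K x y)
      ≤ (1 / πA) * π01 :=
    mul_le_mul_of_nonneg_left part2 (by positivity)
  have h2 : (1 / πA) * π01 = 2 * π01 / (1 - π0) := by
    have h3 : 1 - π0 = 2 * πA := by linarith
    rw [h3]
    field_simp
  linarith
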